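/- Let d and m be positive integers with m+1 ≤ d, let a_1,…,a_p and b_1,…,b_q be positive integers with a_1+⋯+a_p = b_1+⋯+b_q = d, and let τ_1, τ_2, σ_1 be permutations of {1,…,d} such that τ_1 τ_2 σ_1 is the identity, the cycle partition of τ_1 is (a_1,…,a_p), the cycle partition of τ_2 is (b_1,…,b_q), and σ_1 is a cycle of length m+1. Then the subgroup of S_d generated by τ_1, τ_2, σ_1 acts transitively on {1,…,d} if and only if for every x ∈ {1,…,d} there exist integers n, n' ≥ 0 such that τ_1^n(x) lies in the support of σ_1 and τ_2^{n'}(x) lies in the support of σ_1 (equivalently, every cycle factor of τ_1 and of τ_2 intersects the support of σ_1). -/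

import Mathlib

/-- The cycle partition of a permutation of `Fin d`: the multiset of lengths of its disjoint
cycles, with fixed points counted as cycles of length `1`. It is a partition of `d`. -/
def cyclePartition {d : ℕ} (g : Equiv.Perm (Fin d)) : Multiset ℕ :=
  g.cycleType + Multiset.replicate (d - g.support.card) 1

/-- Auxiliary lemma: if the `τ`-orbit of `x` avoids the support of `σ`, and `ρ` agrees with
`τ⁻¹` (resp. `ρ⁻¹` with `τ`) off the support of `σ`, then the `τ`-orbit of `x` is invariant
under the closure of `{τ, ρ, σ}`. -/
theorem aux_orbit_invariant {d : ℕ} (τ ρ σ : Equiv.Perm (Fin d))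
    (h1 : ∀ y : Fin d, y ∉ σ.support → τ⁻¹ y ∉ σ.support → ρ y = τ⁻¹ y)
    (h2 : ∀ y : Fin d, y ∉ σ.support → τ y ∉ σ.support → ρ⁻¹ y = τ y)
    (x : Fin d) (hx : ∀ n : ℕ, (τ ^ n) x ∉ σ.support) :
    ∀ g ∈ Subgroup.closure {τ, ρ, σ}, ∀ y : Fin d,
      τ.SameCycle x y → τ.SameCycle x (g y) ∧ τ.SameCycle x (g⁻¹ y) := by
  -- every point in the τ-orbit of x avoids the support of σ
  have hO : ∀ y : Fin d, τ.SameCycle x y → y ∉ σ.support := by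
    intro y hy
    obtain ⟨i, hi, rfl⟩ := hy.exists_pow_eq'
    exact hx i
  intro g hg
  induction hg using Subgroup.closure_induction with
  | mem z hz =>
    rcases hz with rfl | rfl | rfl
    · intro y hy
      refine ⟨hy.trans ⟨1, by simp⟩, hy.trans ⟨-1, by simp⟩⟩
    · intro y hy
      have hy' : τ.SameCycle x (τ⁻¹ y) := hy.trans ⟨-1, by simp⟩
      have hy'' : τ.SameCycle x (τ y) := hy.trans ⟨1, by simp⟩
      constructor
      · rw [h1 y (hO y hy) (hO _ hy')]; exact hy'
      · rw [h2 y (hO y hy) (hO _ hy'')]; exact hy''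
    · intro y hy
      have h1' : z y = y := Equiv.Perm.notMem_support.mp (hO y hy)
      have h2' : z⁻¹ y = y := by
        refine Equiv.Perm.notMem_support.mp ?_
        rw [Equiv.Perm.support_inv]; exact hO y hy
      rw [h1', h2']; exact ⟨hy, hy⟩
  | one => intro y hy; refine ⟨?_, ?_⟩ <;> simpa
  | mul g h _ _ ihg ihh =>
    intro y hy
    constructor
    · have := (ihg _ ((ihh y hy).1)).1
      simpa [Equiv.Perm.mul_apply] using this
    · have := (ihh _ ((ihg y hy).2)).2
      simpa [Equiv.Perm.mul_apply] using this
  | inv g _ ihg =>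
    intro y hy
    exact ⟨(ihg y hy).2, by simpa using (ihg y hy).1⟩

/-- Lemma 2.10. -/
theorem transitive_iff_both_meet (d m p q : ℕ) (hd : 0 < d) (hm : 0 < m) (hmd : m + 1 ≤ d)
    (a : Fin p → ℕ) (b : Fin q → ℕ)
    (ha : ∀ i, 0 < a i) (hb : ∀ j, 0 < b j)
    (hsa : ∑ i, a i = d) (hsb : ∑ j, b j = d)
    (τ₁ τ₂ σ₁ : Equiv.Perm (Fin d))
    (hprod : τ₁ * τ₂ * σ₁ = 1)
    (hτ₁ : cyclePartition τ₁ = (List.ofFn a : Multiset ℕ))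
    (hτ₂ : cyclePartition τ₂ = (List.ofFn b : Multiset ℕ))
    (hσ₁ : σ₁.IsCycle) (hσ₁len : σ₁.support.card = m + 1) :
    (∀ x y : Fin d, ∃ g ∈ Subgroup.closure {τ₁, τ₂, σ₁}, g x = y) ↔
      (∀ x : Fin d, (∃ n : ℕ, (τ₁ ^ n) x ∈ σ₁.support) ∧
        (∃ n' : ℕ, (τ₂ ^ n') x ∈ σ₁.support)) := by
  -- basic consequences of τ₁ * τ₂ * σ₁ = 1
  have hτ₂eq : τ₂ = τ₁⁻¹ * σ₁⁻¹ := by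
    have h := hprod
    rw [mul_assoc, mul_eq_one_iff_inv_eq] at h
    rw [h]; group
  have hτ₁eq : τ₁ = σ₁⁻¹ * τ₂⁻¹ := by
    rw [hτ₂eq]; group
  -- support of σ₁ is nonempty
  obtain ⟨w, hw⟩ : ∃ w, w ∈ σ₁.support := by
    have : 0 < σ₁.support.card := by omega
    exact Finset.card_pos.mp this
  constructor
  · intro htrans x
    constructor
    · by_contra hcon
      push_neg at hcon
      have h1 : ∀ y : Fin d, y ∉ σ₁.support → τ₁⁻¹ y ∉ σ₁.support → τ₂ y = τ₁⁻¹ y := by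
        intro y hy _
        rw [hτ₂eq]
        simp [Equiv.Perm.mul_apply, Equiv.Perm.notMem_support.mp
          (by rwa [Equiv.Perm.support_inv] : y ∉ σ₁⁻¹.support)]
      have h2 : ∀ y : Fin d, y ∉ σ₁.support → τ₁ y ∉ σ₁.support → τ₂⁻¹ y = τ₁ y := by
        intro y _ hτy
        have : τ₂⁻¹ = σ₁ * τ₁ := by rw [hτ₂eq]; group
        rw [this]
        simp [Equiv.Perm.mul_apply, Equiv.Perm.notMem_support.mp hτy]
      obtain ⟨g, hg, hgx⟩ := htrans x w
      have := (aux_orbit_invariant τ₁ τ₂ σ₁ h1 h2 x hcon g hg x ⟨0, by simp⟩).1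
      rw [hgx] at this
      -- w is in the orbit, hence not in the support: contradiction
      have hw' : w ∉ σ₁.support := by
        obtain ⟨i, _, rfl⟩ := this.exists_pow_eq'
        exact hcon i
      exact hw' hw
    · by_contra hcon
      push_neg at hcon
      have h1 : ∀ y : Fin d, y ∉ σ₁.support → τ₂⁻¹ y ∉ σ₁.support → τ₁ y = τ₂⁻¹ y := by
        intro y _ hτy
        rw [hτ₁eq]
        rw [Equiv.Perm.mul_apply, Equiv.Perm.notMem_support.mp
          (by rwa [Equiv.Perm.support_inv] : τ₂⁻¹ y ∉ σ₁⁻¹.support)]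
      have h2 : ∀ y : Fin d, y ∉ σ₁.support → τ₂ y ∉ σ₁.support → τ₁⁻¹ y = τ₂ y := by
        intro y hy _
        have : τ₁⁻¹ = τ₂ * σ₁ := by rw [hτ₁eq]; group
        rw [this]
        simp [Equiv.Perm.mul_apply, Equiv.Perm.notMem_support.mp hy]
      have hset : ({τ₂, τ₁, σ₁} : Set (Equiv.Perm (Fin d))) = {τ₁, τ₂, σ₁} := by
        ext z; simp; tauto
      obtain ⟨g, hg, hgx⟩ := htrans x w
      rw [← hset] at hg
      have := (aux_orbit_invariant τ₂ τ₁ σ₁ h1 h2 x hcon g hg x ⟨0, by simp⟩).1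
      rw [hgx] at this
      have hw' : w ∉ σ₁.support := by
        obtain ⟨i, _, rfl⟩ := this.exists_pow_eq'
        exact hcon i
      exact hw' hw
  · intro h x y
    obtain ⟨n, hn⟩ := (h x).1
    obtain ⟨n', hn'⟩ := (h y).1
    obtain ⟨k, hk⟩ := hσ₁.exists_pow_eq (Equiv.Perm.mem_support.mp hn)
      (Equiv.Perm.mem_support.mp hn')
    have hτ₁mem : τ₁ ∈ Subgroup.closure {τ₁, τ₂, σ₁} :=
      Subgroup.subset_closure (by simp)
    have hσ₁mem : σ₁ ∈ Subgroup.closure {τ₁, τ₂, σ₁} :=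
      Subgroup.subset_closure (by simp)
    refine ⟨(τ₁ ^ n')⁻¹ * (σ₁ ^ k * τ₁ ^ n), ?_, ?_⟩
    · exact mul_mem (inv_mem (pow_mem hτ₁mem n')) (mul_mem (pow_mem hσ₁mem k)
        (pow_mem hτ₁mem n))
    · simp only [Equiv.Perm.mul_apply]
      rw [hk]
      simp
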